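/- Suppose relations f, R on a set V satisfy T1[f] (R(u,v) ↔ u = v ∨ ∃w. f(u,w) ∧ R(w,v)) and the induction principle Ind: for every predicate P on V and every z ∈ V, if P(z) holds and P is preserved along f-edges (P(u) ∧ f(u,v) → P(v)), then for all u, R(z,u) implies P(u). Then T2[f] holds: for all u,v, R(u,v) iff u = v or there exists w with R(u,w) and f(w,v). -/
import Mathlib

theorem stmt_2 {V : Type*} (f R : V → V → Prop)
    (hT1 : ∀ u v : V, R u v ↔ (u = v ∨ ∃ w, f u w ∧ R w v))
    (hInd : ∀ (P : V → Prop) (z : V),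
      (P z ∧ ∀ u v, P u → f u v → P v) → ∀ u, R z u → P u) :
    ∀ u v : V, R u v ↔ (u = v ∨ ∃ w, R u w ∧ f w v) := by
  have hrefl : ∀ u : V, R u u := fun u => (hT1 u u).mpr (Or.inl rfl)
  have hstep : ∀ u w v : V, f u w → R w v → R u v := fun u w v hf hr =>
    (hT1 u v).mpr (Or.inr ⟨w, hf, hr⟩)
  have htrans : ∀ u w : V, R u w → ∀ v, R w v → R u v := by
    intro u
    exact hInd (fun x => ∀ v, R x v → R u v) u
      ⟨fun v h => h, fun a b ha hf v hb => ha v (hstep a b v hf hb)⟩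
  have hext : ∀ u w v : V, R u w → f w v → R u v := by
    intro u w v hr hf
    exact htrans u w hr v (hstep w v v hf (hrefl v))
  intro u v
  constructor
  · intro h
    have := hInd (fun x => u = x ∨ ∃ w, R u w ∧ f w x) u
      ⟨Or.inl rfl, by
        rintro a b (rfl | ⟨w, hw, hfw⟩) hf
        · exact Or.inr ⟨u, hrefl u, hf⟩
        · exact Or.inr ⟨a, hext u w a hw hfw, hf⟩⟩ v h
    rcases this with h | h
    · exact Or.inl h
    · exact Or.inr h
  · rintro (rfl | ⟨w, hw, hf⟩)
    · exact hrefl u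
    · exact hext u w v hw hf
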